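/- Let $n \geq 1$ and define $f : \mathbb{R}^n \to \mathbb{R}$ by $f(x) = \sqrt{\lVert x \rVert^2 + 1}$ (Euclidean norm). Then for every sequence $(x_i)$ in $\mathbb{R}^n$ with $f(x_i) \to +\infty$, one has $\lVert \nabla f(x_i) \rVert \to 1$. In particular, there is no sequence $(x_i)$ in $\mathbb{R}^n$ such that $f(x_i) \to \sup_{\mathbb{R}^n} f$ (i.e., $f(x_i) \to +\infty$) and $\lVert \nabla f(x_i) \rVert \to 0$. -/

import Mathlib

open Filter Topology InnerProductSpace

lemma grad_aux {n : ℕ} (x : EuclideanSpace ℝ (Fin n)) :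
    HasGradientAt (fun y : EuclideanSpace ℝ (Fin n) => Real.sqrt (‖y‖ ^ 2 + 1))
      ((Real.sqrt (‖x‖ ^ 2 + 1))⁻¹ • x) x := by
  have hpos : (0:ℝ) < ‖x‖ ^ 2 + 1 := by positivity
  have h1 : HasFDerivAt (fun y : EuclideanSpace ℝ (Fin n) => ‖y‖ ^ 2 + 1)
      (2 • (innerSL ℝ x)) x := ((hasStrictFDerivAt_norm_sq x).hasFDerivAt).add_const 1
  have h2 := (Real.hasDerivAt_sqrt hpos.ne').comp_hasFDerivAt x h1
  have h3 : ((1 / (2 * Real.sqrt (‖x‖ ^ 2 + 1))) • (2 • (innerSL ℝ x)))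
      = toDual ℝ (EuclideanSpace ℝ (Fin n)) ((Real.sqrt (‖x‖ ^ 2 + 1))⁻¹ • x) := by
    have hs : Real.sqrt (‖x‖ ^ 2 + 1) ≠ 0 := (Real.sqrt_pos.2 hpos).ne'
    ext y
    simp [toDual_apply_apply, real_inner_smul_left]
    field_simp
  rw [HasGradientAt, HasGradientAtFilter, ← h3]
  exact h2

lemma norm_grad {n : ℕ} (x : EuclideanSpace ℝ (Fin n))
    (f : EuclideanSpace ℝ (Fin n) → ℝ)
    (hf : ∀ x, f x = Real.sqrt (‖x‖ ^ 2 + 1)) :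
    ‖gradient f x‖ = ‖x‖ / Real.sqrt (‖x‖ ^ 2 + 1) := by
  have hg : HasGradientAt f ((Real.sqrt (‖x‖ ^ 2 + 1))⁻¹ • x) x := by
    have := grad_aux x
    simpa [← funext hf] using this
  rw [hg.gradient, norm_smul]
  have hs : (0:ℝ) < Real.sqrt (‖x‖ ^ 2 + 1) := Real.sqrt_pos.2 (by positivity)
  rw [norm_inv, Real.norm_eq_abs, abs_of_pos hs, div_eq_inv_mul]

/-- Optimality remark of Section 4: for `f(x) = √(‖x‖² + 1)` on `ℝⁿ`, along any
sequence with `f(xᵢ) → +∞` one has `‖∇f(xᵢ)‖ → 1`; in particular there is no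
sequence with `f(xᵢ) → +∞` (i.e. `f(xᵢ) → sup f`) and `‖∇f(xᵢ)‖ → 0`. -/
theorem stmt_6 (n : ℕ) (hn : 1 ≤ n)
    (f : EuclideanSpace ℝ (Fin n) → ℝ)
    (hf : ∀ x, f x = Real.sqrt (‖x‖ ^ 2 + 1)) :
    (∀ x : ℕ → EuclideanSpace ℝ (Fin n),
      Tendsto (fun i => f (x i)) atTop atTop →
      Tendsto (fun i => ‖gradient f (x i)‖) atTop (𝓝 1)) ∧
    ¬ ∃ x : ℕ → EuclideanSpace ℝ (Fin n),
      Tendsto (fun i => f (x i)) atTop atTop ∧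
      Tendsto (fun i => ‖gradient f (x i)‖) atTop (𝓝 0) := by
  have main : ∀ x : ℕ → EuclideanSpace ℝ (Fin n),
      Tendsto (fun i => f (x i)) atTop atTop →
      Tendsto (fun i => ‖gradient f (x i)‖) atTop (𝓝 1) := by
    intro x hx
    -- norms tend to infinity
    have hnorm : Tendsto (fun i => ‖x i‖) atTop atTop := by
      apply tendsto_atTop_mono (f := fun i => f (x i) - 1)
      · intro i
        rw [hf]
        have : Real.sqrt (‖x i‖ ^ 2 + 1) ≤ ‖x i‖ + 1 := by
          have h1 : ‖x i‖ ^ 2 + 1 ≤ (‖x i‖ + 1) ^ 2 := by nlinarith [norm_nonneg (x i)]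
          calc Real.sqrt (‖x i‖ ^ 2 + 1) ≤ Real.sqrt ((‖x i‖ + 1) ^ 2) := Real.sqrt_le_sqrt h1
            _ = ‖x i‖ + 1 := Real.sqrt_sq (by positivity)
        linarith
      · exact hx.atTop_add tendsto_const_nhds
    -- limit of auxiliary expression
    have haux : Tendsto (fun i => (Real.sqrt (1 + (‖x i‖⁻¹) ^ 2))⁻¹) atTop (𝓝 1) := by
      have h0 : Tendsto (fun i => ‖x i‖⁻¹) atTop (𝓝 0) :=
        (tendsto_inv_atTop_zero).comp hnorm
      have h1 : Tendsto (fun i => 1 + (‖x i‖⁻¹) ^ 2) atTop (𝓝 1) := by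
        have := (tendsto_const_nhds (x := (1:ℝ)) (f := atTop (α := ℕ))).add (h0.pow 2)
        simpa using this
      have h2 : Tendsto (fun i => Real.sqrt (1 + (‖x i‖⁻¹) ^ 2)) atTop (𝓝 1) := by
        have := (Real.continuous_sqrt.tendsto 1).comp h1
        simpa [Function.comp_def] using this
      simpa using h2.inv₀ one_ne_zero
    refine haux.congr' ?_
    filter_upwards [hnorm.eventually_gt_atTop 0] with i hi
    have hs : (0:ℝ) < Real.sqrt (‖x i‖ ^ 2 + 1) := Real.sqrt_pos.2 (by positivity)
    rw [norm_grad _ f hf]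
    have hsq : (1 + (‖x i‖⁻¹) ^ 2 : ℝ) = (‖x i‖ ^ 2 + 1) / ‖x i‖ ^ 2 := by
      field_simp
    rw [hsq, Real.sqrt_div (by positivity), Real.sqrt_sq hi.le, inv_div]
  refine ⟨main, ?_⟩
  rintro ⟨x, hx1, hx2⟩
  exact one_ne_zero (tendsto_nhds_unique (main x hx1) hx2)
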